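/- Let X := 2^ω and A := {0^∞} × (2^ω ∖ {0^∞}). Then (i) there is no continuous countable coloring of (X,A), and (ii) every continuous f: 2^ω → 2^ω with {(0^{2i}1α, 0^{2i+1}1β) : i,α,β} ⊆ (f×f)^{-1}(A) satisfies f(0^{2i}1α) = 0^∞ for all i and α; in particular f is not injective. -/
import Mathlib


/-- Concatenation of a finite binary sequence with an infinite one. -/
def cat (u : List Bool) (γ : ℕ → Bool) : ℕ → Bool :=
  fun n => u.getD n (γ (n - u.length))

/-- `A₁ = {(0^{2i}1α, 0^{2i+1}1β) : i, α, β}`. -/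
def A1 : Set ((ℕ → Bool) × (ℕ → Bool)) :=
  {p | ∃ i α β, p = (cat (List.replicate (2 * i) false ++ [true]) α,
                     cat (List.replicate (2 * i + 1) false ++ [true]) β)}

/-- `A := {0^∞} × (2^ω ∖ {0^∞})`. -/
def Arel : Set ((ℕ → Bool) × (ℕ → Bool)) :=
  {p | p.1 = (fun _ => false) ∧ p.2 ≠ (fun _ => false)}

/-- `(2^ω, A)` has no continuous countable coloring, and every
continuous `f` with `A₁ ⊆ (f × f)⁻¹(A)` sends each `0^{2i}1α` to `0^∞`; in
particular `f` is not injective. -/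
theorem stmt7 :
    (¬ ∃ c : (ℕ → Bool) → ℕ, Continuous c ∧
      ∀ x y, (x, y) ∈ Arel → c x ≠ c y) ∧
    (∀ f : (ℕ → Bool) → (ℕ → Bool), Continuous f →
      (∀ p ∈ A1, (f p.1, f p.2) ∈ Arel) →
      (∀ i (α : ℕ → Bool),
          f (cat (List.replicate (2 * i) false ++ [true]) α) = fun _ => false) ∧
      ¬ Function.Injective f) := by
  constructor
  · rintro ⟨c, hc, hcol⟩
    set z : ℕ → Bool := fun _ => false with hz
    have hxn : ∀ n : ℕ, (fun k => decide (k = n)) ≠ z := by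
      intro n h
      have := congrFun h n
      simp [z] at this
    have htend : Filter.Tendsto (fun n : ℕ => (fun k => decide (k = n)))
        Filter.atTop (nhds z) := by
      rw [tendsto_pi_nhds]
      intro k
      apply Filter.Tendsto.congr' _ tendsto_const_nhds
      filter_upwards [Filter.eventually_gt_atTop k] with n hn
      simp [z, Nat.ne_of_lt hn]
    have h2 : Filter.Tendsto (fun n : ℕ => c (fun k => decide (k = n)))
        Filter.atTop (nhds (c z)) := (hc.tendsto z).comp htend
    rw [nhds_discrete, Filter.tendsto_pure] at h2
    obtain ⟨n, hn⟩ := h2.exists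
    exact hcol z (fun k => decide (k = n)) ⟨rfl, hxn n⟩ hn.symm
  · intro f _hf hA
    have key : ∀ i (α : ℕ → Bool),
        f (cat (List.replicate (2 * i) false ++ [true]) α) = fun _ => false := by
      intro i α
      exact (hA _ ⟨i, α, α, rfl⟩).1
    refine ⟨key, ?_⟩
    intro hinj
    have h1 := key 0 (fun _ => false)
    have h2 := key 1 (fun _ => false)
    have heq := hinj (h1.trans h2.symm)
    have := congrFun heq 0
    simp [cat, List.replicate] at this
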